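/- Let (E,A) and (F,B) be categories with dense generators and F:E→F a functor. Then F respects arities (ν_B∘F sends A-cocones to colimit cocones) if and only if for every object B of B, every object X of E, and every morphism f:B→FX, the factorisation category Fact_A(F,f) is connected. -/

import Mathlib

open CategoryTheory CategoryTheory.Limits

universe w v u₁ u₂

def canCocone {A : Type v} [SmallCategory A] {E : Type u₁} [Category.{v} E]
    (i : A ⥤ E) (X : E) : Cocone (CostructuredArrow.proj i X ⋙ i) where
  pt := X
  ι :=
    { app := fun f => f.hom
      naturality := fun f g m => by exact (CostructuredArrow.w m).trans (Category.comp_id _).symm }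

namespace CategoryTheory.Presheaf

def restrictedYoneda {C : Type v} [SmallCategory C] {ℰ : Type u₂} [Category.{v} ℰ]
    (A : C ⥤ ℰ) : ℰ ⥤ Cᵒᵖ ⥤ Type v :=
  yoneda ⋙ (Functor.whiskeringLeft _ _ (Type v)).obj (Functor.op A)

end CategoryTheory.Presheaf

def RespectsArities {A : Type v} [SmallCategory A] {E : Type u₁} [Category.{v} E]
    {B : Type v} [SmallCategory B] {F : Type u₂} [Category.{v} F]
    (iA : A ⥤ E) (iB : B ⥤ F) (Fn : E ⥤ F) : Prop :=
  ∀ X : E, Nonempty (IsColimit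
    ((Fn ⋙ Presheaf.restrictedYoneda iB).mapCocone (canCocone iA X)))

section FactCat

variable {A : Type w} [Category.{v} A] {E : Type u₁} [Category.{v} E]
  {F : Type u₂} [Category.{v} F]

/-- The factorisation category `Fact_A(F, f)`. -/
structure FactCat (i : A ⥤ E) (Fn : E ⥤ F) (B : F) (X : E) (f : B ⟶ Fn.obj X) where
  a : A
  g : B ⟶ Fn.obj (i.obj a)
  h : i.obj a ⟶ X
  fac : g ≫ Fn.map h = f

instance (i : A ⥤ E) (Fn : E ⥤ F) (B : F) (X : E) (f : B ⟶ Fn.obj X) :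
    Category (FactCat i Fn B X f) where
  Hom o₁ o₂ := {k : o₁.a ⟶ o₂.a //
    o₁.g ≫ Fn.map (i.map k) = o₂.g ∧ i.map k ≫ o₂.h = o₁.h}
  id o := ⟨𝟙 _, by simp⟩
  comp {o₁ o₂ o₃} k l := ⟨k.1 ≫ l.1, by
    obtain ⟨k, hk1, hk2⟩ := k
    obtain ⟨l, hl1, hl2⟩ := l
    constructor
    · simp [← hl1, ← hk1]
    · simp [hk2, hl2]⟩
  id_comp f := by apply Subtype.ext; simp
  comp_id f := by apply Subtype.ext; simp
  assoc f g h := by apply Subtype.ext; simp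

end FactCat

section Aux

variable {A : Type v} [SmallCategory A] {E : Type u₁} [Category.{v} E]
  {B : Type v} [SmallCategory B] {F : Type u₂} [Category.{v} F]
  (iA : A ⥤ E) (iB : B ⥤ F) (Fn : E ⥤ F) (b : B) (X : E)

/-- The evaluated diagram. -/
abbrev evD : CostructuredArrow iA X ⥤ Type v :=
  ((CostructuredArrow.proj iA X ⋙ iA) ⋙ (Fn ⋙ Presheaf.restrictedYoneda iB)) ⋙
    (evaluation Bᵒᵖ (Type v)).obj (Opposite.op b)

/-- The evaluation at `b` of the image of the canonical cocone. -/
abbrev evCocone : Cocone (evD iA iB Fn b X) :=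
  ((evaluation Bᵒᵖ (Type v)).obj (Opposite.op b)).mapCocone
    ((Fn ⋙ Presheaf.restrictedYoneda iB).mapCocone (canCocone iA X))

lemma evD_obj (j : CostructuredArrow iA X) :
    (evD iA iB Fn b X).obj j = (iB.obj b ⟶ Fn.obj (iA.obj j.left)) := rfl

lemma evD_map {j j' : CostructuredArrow iA X} (k : j ⟶ j')
    (g : iB.obj b ⟶ Fn.obj (iA.obj j.left)) :
    (evD iA iB Fn b X).map k g = g ≫ Fn.map (iA.map k.left) := rfl

lemma evCocone_app (j : CostructuredArrow iA X)
    (g : iB.obj b ⟶ Fn.obj (iA.obj j.left)) :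
    (evCocone iA iB Fn b X).ι.app j g = g ≫ Fn.map j.hom := rfl

/-- Objects of the fiber over `f` give objects of the factorisation category. -/
def toFact {f : iB.obj b ⟶ Fn.obj X}
    (p : Σ j, (evD iA iB Fn b X).obj j)
    (hp : p.2 ≫ Fn.map p.1.hom = f) : FactCat iA Fn (iB.obj b) X f :=
  ⟨p.1.left, p.2, p.1.hom, hp⟩

lemma rel_desc_eq {p q : Σ j, (evD iA iB Fn b X).obj j}
    (h : (evD iA iB Fn b X).ColimitTypeRel p q) :
    p.2 ≫ Fn.map p.1.hom = q.2 ≫ Fn.map q.1.hom := by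
  obtain ⟨k, hk⟩ := h
  rw [hk]
  exact (congrArg (fun g => (p.2 : iB.obj b ⟶ Fn.obj (iA.obj p.1.left)) ≫ g)
    ((Fn.map_comp _ _).symm.trans (congrArg Fn.map (CostructuredArrow.w k)))).symm.trans
    (Category.assoc _ _ _).symm

lemma eqvGen_desc_eq {p q : Σ j, (evD iA iB Fn b X).obj j}
    (h : Relation.EqvGen ((evD iA iB Fn b X).ColimitTypeRel) p q) :
    p.2 ≫ Fn.map p.1.hom = q.2 ≫ Fn.map q.1.hom := by
  induction h with
  | rel _ _ h => exact rel_desc_eq iA iB Fn b X h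
  | refl => rfl
  | symm _ _ _ ih => exact ih.symm
  | trans _ _ _ _ _ ih₁ ih₂ => exact ih₁.trans ih₂

lemma eqvGen_zigzag {f : iB.obj b ⟶ Fn.obj X} {p q : Σ j, (evD iA iB Fn b X).obj j}
    (h : Relation.EqvGen ((evD iA iB Fn b X).ColimitTypeRel) p q)
    (hp : p.2 ≫ Fn.map p.1.hom = f) (hq : q.2 ≫ Fn.map q.1.hom = f) :
    Zigzag (toFact iA iB Fn b X p hp) (toFact iA iB Fn b X q hq) := by
  induction h with
  | rel p q h =>
      obtain ⟨k, hk⟩ := h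
      refine Relation.ReflTransGen.single (Or.inl ⟨⟨k.left, ?_, CostructuredArrow.w k⟩⟩)
      exact (hk.trans (evD_map iA iB Fn b X k p.2)).symm
  | refl => exact Relation.ReflTransGen.refl
  | symm x y h ih => exact zigzag_symmetric.symm _ _ (ih hq hp)
  | trans x y z h₁ h₂ ih₁ ih₂ =>
      have hy : y.2 ≫ Fn.map y.1.hom = f :=
        (eqvGen_desc_eq iA iB Fn b X h₁).symm.trans hp
      exact (ih₁ hp hy).trans (ih₂ hy hq)

lemma bijective_iff_connected :
    Function.Bijective ((evD iA iB Fn b X).descColimitType ((evD iA iB Fn b X).coconeTypesEquiv.symm (evCocone iA iB Fn b X))) ↔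
      ∀ f : iB.obj b ⟶ Fn.obj X, IsConnected (FactCat iA Fn (iB.obj b) X f) := by
  constructor
  · intro hbij f
    obtain ⟨x, hx⟩ := hbij.2 f
    obtain ⟨j, g, rfl⟩ := Functor.ιColimitType_jointly_surjective _ x
    rw [Functor.descColimitType_ιColimitType_apply] at hx
    have : Nonempty (FactCat iA Fn (iB.obj b) X f) := ⟨toFact iA iB Fn b X ⟨j, g⟩ hx⟩
    apply zigzag_isConnected
    intro o₁ o₂
    have h₁ : (⟨CostructuredArrow.mk o₁.h, o₁.g⟩ : Σ j, (evD iA iB Fn b X).obj j).2 ≫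
        Fn.map (CostructuredArrow.mk (S := iA) o₁.h).hom = f := o₁.fac
    have h₂ : (⟨CostructuredArrow.mk o₂.h, o₂.g⟩ : Σ j, (evD iA iB Fn b X).obj j).2 ≫
        Fn.map (CostructuredArrow.mk (S := iA) o₂.h).hom = f := o₂.fac
    have heq : (evD iA iB Fn b X).ιColimitType (CostructuredArrow.mk o₁.h) o₁.g =
        (evD iA iB Fn b X).ιColimitType (CostructuredArrow.mk o₂.h) o₂.g := by
      apply hbij.1
      exact h₁.trans h₂.symm
    have hgen := Quot.eq.1 heq
    have hz := eqvGen_zigzag iA iB Fn b X hgen h₁ h₂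
    have e₁ : toFact iA iB Fn b X ⟨CostructuredArrow.mk o₁.h, o₁.g⟩ h₁ = o₁ := rfl
    have e₂ : toFact iA iB Fn b X ⟨CostructuredArrow.mk o₂.h, o₂.g⟩ h₂ = o₂ := rfl
    rwa [e₁, e₂] at hz
  · intro hconn
    constructor
    · intro x y hxy
      obtain ⟨j₁, g₁, rfl⟩ := Functor.ιColimitType_jointly_surjective _ x
      obtain ⟨j₂, g₂, rfl⟩ := Functor.ιColimitType_jointly_surjective _ y
      rw [Functor.descColimitType_ιColimitType_apply, Functor.descColimitType_ιColimitType_apply] at hxy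
      set f : iB.obj b ⟶ Fn.obj X := g₁ ≫ Fn.map j₁.hom with hf
      have h₁ : g₁ ≫ Fn.map j₁.hom = f := rfl
      have h₂ : g₂ ≫ Fn.map j₂.hom = f := hxy.symm
      have := hconn f
      have hz : Zigzag (toFact iA iB Fn b X ⟨j₁, g₁⟩ h₁) (toFact iA iB Fn b X ⟨j₂, g₂⟩ h₂) :=
        isPreconnected_zigzag _ _
      -- a function constant along morphisms of FactCat
      have key : ∀ (o₁ o₂ : FactCat iA Fn (iB.obj b) X f), Zigzag o₁ o₂ →
          (evD iA iB Fn b X).ιColimitType (CostructuredArrow.mk o₁.h) o₁.g =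
          (evD iA iB Fn b X).ιColimitType (CostructuredArrow.mk o₂.h) o₂.g := by
        intro o₁ o₂ hzz
        have step : ∀ (u v : FactCat iA Fn (iB.obj b) X f), (u ⟶ v) →
            (evD iA iB Fn b X).ιColimitType (CostructuredArrow.mk u.h) u.g =
            (evD iA iB Fn b X).ιColimitType (CostructuredArrow.mk v.h) v.g := by
          intro u v m
          refine Quot.sound ⟨CostructuredArrow.homMk m.1 m.2.2, ?_⟩
          exact (m.2.1.symm.trans (by rw [evD_map]; rfl))
        induction hzz with
        | refl => rfl
        | tail _ hzag ih =>
            refine ih.trans ?_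
            rcases hzag with ⟨⟨m⟩⟩ | ⟨⟨m⟩⟩
            · exact step _ _ m
            · exact (step _ _ m).symm
      exact key _ _ hz
    · intro f
      have := hconn f
      obtain ⟨o⟩ := (hconn f).is_nonempty
      exact ⟨(evD iA iB Fn b X).ιColimitType (CostructuredArrow.mk o.h) o.g,
        by exact o.fac⟩

end Aux

/-- `F` respects arities iff all factorisation categories
`Fact_A(F,f)`, for `f : i_B(b) ⟶ F X`, are connected. -/
theorem respectsArities_iff_factCat_connected
    {A : Type v} [SmallCategory A] {E : Type u₁} [Category.{v} E]
    {B : Type v} [SmallCategory B] {F : Type u₂} [Category.{v} F]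
    (iA : A ⥤ E) (iB : B ⥤ F)
    (hA : (Presheaf.restrictedYoneda iA).Full ∧ (Presheaf.restrictedYoneda iA).Faithful)
    (hB : (Presheaf.restrictedYoneda iB).Full ∧ (Presheaf.restrictedYoneda iB).Faithful)
    (Fn : E ⥤ F) :
    RespectsArities iA iB Fn ↔
      ∀ (b : B) (X : E) (f : iB.obj b ⟶ Fn.obj X),
        IsConnected (FactCat iA Fn (iB.obj b) X f) := by
  constructor
  · intro h b X f
    have hc := (h X).some
    have hc' := isColimitOfPreserves ((evaluation Bᵒᵖ (Type v)).obj (Opposite.op b)) hc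
    exact (bijective_iff_connected iA iB Fn b X).mp
      ((Types.isColimit_iff_coconeTypesIsColimit _).mp ⟨hc'⟩).bijective f
  · intro h X
    refine ⟨evaluationJointlyReflectsColimits _ fun bop => ?_⟩
    exact ((Types.isColimit_iff_coconeTypesIsColimit _).mpr
      ⟨(bijective_iff_connected iA iB Fn bop.unop X).mpr (fun f => h bop.unop X f)⟩).some
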